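/- Let v₁, …, v_{k+1} be vectors in R^k with ‖v_i‖ = R for all i, and λ₁, …, λ_{k+1} ∈ [0,1] with Σλ_i = 1 and Σ λ_i v_i = 0. If ‖v_i − v_j‖ ≤ D for all i ≠ j, then 2R² ≤ (1 − 1/(k+1)) D², i.e. R ≤ √(k/(k+1)) · D/√2. -/

import Mathlib

/-- If `v₁, …, v_{k+1}` are vectors in `ℝᵏ` of norm `R`, forming a convex combination of the
origin with weights `λᵢ`, and mutually at distance at most `D`, then
`2R² ≤ (1 - 1/(k+1))·D²`. -/
theorem stmt_5 (k : ℕ) (R D : ℝ) (v : Fin (k + 1) → EuclideanSpace ℝ (Fin k))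
    (l : Fin (k + 1) → ℝ) (hl : ∀ i, l i ∈ Set.Icc (0 : ℝ) 1)
    (hsum : ∑ i, l i = 1) (hbary : ∑ i, l i • v i = 0)
    (hnorm : ∀ i, ‖v i‖ = R)
    (hD : ∀ i j, i ≠ j → ‖v i - v j‖ ≤ D) :
    2 * R ^ 2 ≤ (1 - 1 / ((k : ℝ) + 1)) * D ^ 2 := by
  have hl0 : ∀ i, 0 ≤ l i := fun i => (hl i).1
  -- inner product sum vanishes
  have hip : ∑ i, ∑ j, l i * l j * (inner ℝ (v i) (v j) : ℝ) = 0 := by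
    have : (inner ℝ (∑ i, l i • v i) (∑ j, l j • v j) : ℝ) = 0 := by
      rw [hbary]; simp
    rw [sum_inner] at this
    simp only [inner_sum, real_inner_smul_left, real_inner_smul_right] at this
    rw [← this]
    exact Finset.sum_congr rfl fun i _ => Finset.sum_congr rfl fun j _ => by ring
  -- key identity
  have key : 2 * R ^ 2 = ∑ i, ∑ j, l i * l j * ‖v i - v j‖ ^ 2 := by
    have expand : ∀ i j : Fin (k+1), l i * l j * ‖v i - v j‖ ^ 2 =
        2 * R ^ 2 * (l i * l j) - 2 * (l i * l j * (inner ℝ (v i) (v j) : ℝ)) := by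
      intro i j
      rw [norm_sub_sq_real, hnorm, hnorm]; ring
    calc 2 * R ^ 2 = 2 * R ^ 2 * ((∑ i, l i) * (∑ j, l j))
          - 2 * (∑ i, ∑ j, l i * l j * (inner ℝ (v i) (v j) : ℝ)) := by
          rw [hsum, hip]; ring
      _ = ∑ i, ∑ j, (2 * R ^ 2 * (l i * l j)
            - 2 * (l i * l j * (inner ℝ (v i) (v j) : ℝ))) := by
          rw [Finset.sum_mul_sum, Finset.mul_sum, Finset.mul_sum, ← Finset.sum_sub_distrib]
          refine Finset.sum_congr rfl fun i _ => ?_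
          rw [Finset.mul_sum, Finset.mul_sum, ← Finset.sum_sub_distrib]
      _ = ∑ i, ∑ j, l i * l j * ‖v i - v j‖ ^ 2 :=
          Finset.sum_congr rfl fun i _ => Finset.sum_congr rfl fun j _ => (expand i j).symm
  -- drop diagonal and bound
  have hdiag : ∀ i : Fin (k+1),
      ∑ j, l i * l j * ‖v i - v j‖ ^ 2
        = ∑ j ∈ Finset.univ.erase i, l i * l j * ‖v i - v j‖ ^ 2 := by
    intro i
    exact (Finset.sum_erase _ (by simp)).symm
  have hbound : ∑ i, ∑ j, l i * l j * ‖v i - v j‖ ^ 2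
      ≤ (1 - ∑ i, (l i) ^ 2) * D ^ 2 := by
    have step : ∀ i : Fin (k+1),
        ∑ j ∈ Finset.univ.erase i, l i * l j * ‖v i - v j‖ ^ 2
          ≤ l i * (1 - l i) * D ^ 2 := by
      intro i
      have h1 : ∑ j ∈ Finset.univ.erase i, l i * l j * ‖v i - v j‖ ^ 2
          ≤ ∑ j ∈ Finset.univ.erase i, l i * l j * D ^ 2 := by
        apply Finset.sum_le_sum
        intro j hj
        have hij : i ≠ j := fun h => (Finset.mem_erase.mp hj).1 h.symm
        have := pow_le_pow_left₀ (norm_nonneg (v i - v j)) (hD i j hij) 2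
        exact mul_le_mul_of_nonneg_left this (mul_nonneg (hl0 i) (hl0 j))
      have h2 : ∑ j ∈ Finset.univ.erase i, l i * l j * D ^ 2
          = l i * (1 - l i) * D ^ 2 := by
        rw [← Finset.sum_mul, ← Finset.mul_sum,
          Finset.sum_erase_eq_sub (Finset.mem_univ i), hsum]
      linarith [h1, h2.le, h2.ge]
    calc ∑ i, ∑ j, l i * l j * ‖v i - v j‖ ^ 2
        = ∑ i, ∑ j ∈ Finset.univ.erase i, l i * l j * ‖v i - v j‖ ^ 2 :=
          Finset.sum_congr rfl fun i _ => hdiag i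
      _ ≤ ∑ i, l i * (1 - l i) * D ^ 2 := Finset.sum_le_sum fun i _ => step i
      _ = (1 - ∑ i, (l i) ^ 2) * D ^ 2 := by
          rw [← Finset.sum_mul]
          congr 1
          have : ∑ i, l i * (1 - l i) = (∑ i, l i) - ∑ i, (l i)^2 := by
            rw [← Finset.sum_sub_distrib]
            exact Finset.sum_congr rfl fun i _ => by ring
          rw [this, hsum]
  -- sum of squares lower bound
  have hsq : 1 / ((k : ℝ) + 1) ≤ ∑ i, (l i) ^ 2 := by
    have h := sq_sum_le_card_mul_sum_sq (s := (Finset.univ : Finset (Fin (k+1)))) (f := l)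
    rw [hsum] at h
    simp only [Finset.card_univ, Fintype.card_fin] at h
    have hk : (0:ℝ) < (k : ℝ) + 1 := by positivity
    rw [div_le_iff₀ hk]
    push_cast at h ⊢
    linarith
  have hD2 : (0:ℝ) ≤ D ^ 2 := sq_nonneg D
  have : (1 - ∑ i, (l i) ^ 2) * D ^ 2 ≤ (1 - 1 / ((k : ℝ) + 1)) * D ^ 2 :=
    mul_le_mul_of_nonneg_right (by linarith) hD2
  linarith [key.le, hbound]
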